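/- Let A_k be the anti-factorial tree: the balanced rooted tree with k levels in which every vertex on level j has exactly k-j children. Let He_j be the monic Hermite polynomials defined by He_0 = 1, He_1 = x, He_j = x·He_{j-1} - (j-1)·He_{j-2}. Then for k ≥ 1, the characteristic polynomial of the adjacency matrix of A_k equals He_k(x)·∏_{j=2}^{k-1} He_j(x)^{(j-1)(k-1)!/j!}. -/

import Mathlib

open Polynomial

/-- A rooted tree on the vertex set `Fin (n+1)`, encoded by a parent function:
the root is `0`, and every non-root vertex has a parent strictly smaller than
itself (which guarantees acyclicity and connectedness). -/
structure ParentTree (n : ℕ) where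
  parent : Fin (n + 1) → Fin (n + 1)
  parent_lt : ∀ i : Fin (n + 1), i ≠ 0 → parent i < i
  parent_zero : parent 0 = 0

namespace ParentTree

variable {n : ℕ}

/-- The set of children of a vertex. -/
def children (T : ParentTree n) (v : Fin (n + 1)) : Finset (Fin (n + 1)) :=
  Finset.univ.filter fun w => T.parent w = v ∧ w ≠ v

/-- The adjacency matrix of a rooted tree, with entries in `R`. -/
def adjMat (T : ParentTree n) (R : Type) [Zero R] [One R] :
    Matrix (Fin (n + 1)) (Fin (n + 1)) R :=
  Matrix.of fun i j => if i ≠ j ∧ (T.parent i = j ∨ T.parent j = i) then 1 else 0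

/-- The degree of a vertex. -/
def deg (T : ParentTree n) (v : Fin (n + 1)) : ℕ :=
  (T.children v).card + if v = 0 then 0 else 1

end ParentTree

/-- The monic (probabilists') Hermite polynomials:
`He 0 = 1`, `He 1 = X`, `He j = X·He (j-1) - (j-1)·He (j-2)`. -/
noncomputable def hermiteHe : ℕ → Polynomial ℚ
  | 0 => 1
  | 1 => Polynomial.X
  | (j + 2) => Polynomial.X * hermiteHe (j + 1) - Polynomial.C ((j : ℚ) + 1) * hermiteHe j

lemma hermiteHe_monic_deg : ∀ m, (hermiteHe m).Monic ∧ (hermiteHe m).natDegree = m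
  | 0 => ⟨monic_one, natDegree_one⟩
  | 1 => ⟨monic_X, natDegree_X⟩
  | (j + 2) => by
    obtain ⟨h1, d1⟩ := hermiteHe_monic_deg (j + 1)
    obtain ⟨h0, d0⟩ := hermiteHe_monic_deg j
    have hm : (Polynomial.X * hermiteHe (j + 1)).Monic := monic_X.mul h1
    have hd : (Polynomial.X * hermiteHe (j + 1)).natDegree = j + 2 := by
      rw [natDegree_mul X_ne_zero h1.ne_zero, natDegree_X, d1]; omega
    have hdlt : (Polynomial.C ((j : ℚ) + 1) * hermiteHe j).natDegree < j + 2 := by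
      have := natDegree_mul_le (p := Polynomial.C ((j : ℚ) + 1)) (q := hermiteHe j)
      simp only [natDegree_C, zero_add, d0] at this
      omega
    have hlt : (Polynomial.C ((j : ℚ) + 1) * hermiteHe j).degree <
        (Polynomial.X * hermiteHe (j + 1)).degree := by
      rw [degree_eq_natDegree hm.ne_zero, hd]
      exact lt_of_le_of_lt (degree_le_natDegree) (by exact_mod_cast hdlt)
    constructor
    · show (Polynomial.X * hermiteHe (j+1) - _).Monic
      have := hm.add_of_left (q := -(Polynomial.C ((j : ℚ) + 1) * hermiteHe j))
        (by rwa [degree_neg])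
      simpa [sub_eq_add_neg] using this
    · show (Polynomial.X * hermiteHe (j+1) - _).natDegree = j + 2
      rw [← hd]
      apply natDegree_sub_eq_left_of_natDegree_lt
      rw [hd]; omega

lemma hermiteHe_ne_zero (m : ℕ) : hermiteHe m ≠ 0 := (hermiteHe_monic_deg m).1.ne_zero

lemma hermiteHe_zero' : hermiteHe 0 = 1 := rfl
lemma hermiteHe_one' : hermiteHe 1 = Polynomial.X := rfl
lemma hermiteHe_rec (t : ℕ) :
    hermiteHe (t + 2) + Polynomial.C ((t : ℚ) + 1) * hermiteHe t
      = Polynomial.X * hermiteHe (t + 1) := by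
  show Polynomial.X * hermiteHe (t + 1) - Polynomial.C ((t : ℚ) + 1) * hermiteHe t + _ = _
  ring

lemma prod_Icc_reflect {M : Type*} [CommMonoid M] (k : ℕ) (F : ℕ → M) :
    ∏ j ∈ Finset.Icc 1 k, F j = ∏ j ∈ Finset.Icc 1 k, F (k + 1 - j) := by
  refine Finset.prod_nbij' (fun j => k + 1 - j) (fun j => k + 1 - j) ?_ ?_ ?_ ?_ ?_
  · intro a ha; simp only [Finset.mem_Icc] at *; omega
  · intro a ha; simp only [Finset.mem_Icc] at *; omega
  · intro a ha; simp only [Finset.mem_Icc] at *; omega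
  · intro a ha; simp only [Finset.mem_Icc] at *; omega
  · intro a ha
    simp only [Finset.mem_Icc] at ha
    exact congrArg F (by omega : a = k + 1 - (k + 1 - a))

theorem stmt_16 {n : ℕ} (T : ParentTree n)
    (lvl : Fin (n + 1) → ℕ)
    (hlvl0 : lvl 0 = 1)
    (hlvl : ∀ v, v ≠ 0 → lvl v = lvl (T.parent v) + 1)
    (k : ℕ) (hk : 1 ≤ k)
    (hle : ∀ v, lvl v ≤ k)
    (hanti : ∀ v, (T.children v).card = k - lvl v) :
    (T.adjMat ℚ).charpoly =
      hermiteHe k *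
        ∏ j ∈ Finset.Icc 2 (k - 1),
          hermiteHe j ^ ((j - 1) * Nat.factorial (k - 1) / Nat.factorial j) := by
  classical
  -- basic tree facts
  have hmemc : ∀ v w : Fin (n+1), w ∈ T.children v ↔ T.parent w = v ∧ w ≠ v := by
    intro v w; simp [ParentTree.children]
  have hlvl1 : ∀ v, 1 ≤ lvl v := by
    intro v
    by_cases hv : v = 0
    · rw [hv, hlvl0]
    · rw [hlvl v hv]; omega
  have hchild_ne0 : ∀ v w : Fin (n+1), w ∈ T.children v → w ≠ 0 := by
    intro v w hw h0
    rw [hmemc] at hw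
    subst h0
    exact hw.2 (by rw [← hw.1, T.parent_zero])
  have hchild_lvl : ∀ v w : Fin (n+1), w ∈ T.children v → lvl w = lvl v + 1 := by
    intro v w hw
    have h0 := hchild_ne0 v w hw
    rw [hmemc] at hw
    rw [hlvl w h0, hw.1]
  -- the field of rational functions
  set φ : Polynomial ℚ →+* RatFunc ℚ := (algebraMap (Polynomial ℚ) (RatFunc ℚ)) with hφ
  have hφinj : Function.Injective φ := IsFractionRing.injective (Polynomial ℚ) (RatFunc ℚ)
  set a : ℕ → RatFunc ℚ := fun m => φ (hermiteHe m) with haa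
  have ha : ∀ m, a m ≠ 0 := by
    intro m h
    exact hermiteHe_ne_zero m (hφinj (by simpa using h))
  have ha0 : a 0 = 1 := by rw [haa]; simp [hermiteHe_zero']
  have hrec : ∀ t : ℕ, a (t + 2) + ((t : RatFunc ℚ) + 1) * a t = φ Polynomial.X * a (t + 1) := by
    intro t
    have h1 : ((t : RatFunc ℚ) + 1) = φ (Polynomial.C ((t : ℚ) + 1)) := by
      have h2 : (Polynomial.C ((t : ℚ) + 1)) = ((t + 1 : ℕ) : Polynomial ℚ) := by
        rw [map_add, map_one, map_natCast]; push_cast; ring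
      rw [h2, map_natCast]; push_cast; ring
    rw [h1, haa, ← map_mul, ← map_add, hermiteHe_rec, map_mul]
  set f : Fin (n+1) → RatFunc ℚ := fun v => a (k - lvl v + 1) / a (k - lvl v) with hff
  have hf : ∀ v, f v ≠ 0 := fun v => div_ne_zero (ha _) (ha _)
  -- the triangular matrix B
  set B : Matrix (Fin (n+1)) (Fin (n+1)) (RatFunc ℚ) :=
    Matrix.of (fun i j => if T.parent j = i ∧ j ≠ i then -(f j)⁻¹ else if i = j then 1 else 0)
    with hB
  have hBdiag : ∀ i, B i i = 1 := by intro i; simp [hB]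
  have hBtri : B.BlockTriangular id := by
    intro i j hij
    simp only [id_eq] at hij
    have hne : i ≠ j := ne_of_gt hij
    have : ¬ (T.parent j = i ∧ j ≠ i) := by
      rintro ⟨hp, hne'⟩
      have hj0 : j ≠ 0 := by
        rintro rfl
        rw [T.parent_zero] at hp
        exact hne' hp
      have := T.parent_lt j hj0
      rw [hp] at this
      exact absurd hij (not_lt.mpr this.le)
    have hpj : T.parent j ≠ i := fun h => this ⟨h, Ne.symm hne⟩
    simp [hB, hpj, hne]
  have hdetB : B.det = 1 := by
    rw [Matrix.det_of_upperTriangular hBtri]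
    simp [hBdiag]
  -- main matrix identity
  have hmain : (Matrix.charmatrix (T.adjMat ℚ)).map φ = B * Matrix.diagonal f * B.transpose := by
    ext i j
    have hentry : (B * Matrix.diagonal f * B.transpose) i j = ∑ v, B i v * f v * B j v := by
      rw [Matrix.mul_apply]
      simp only [Matrix.mul_diagonal, Matrix.transpose_apply]
    rw [Matrix.map_apply, hentry]
    have hnotmem : i ∉ T.children i := by
      intro h; exact ((hmemc i i).mp h).2 rfl
    have hzero : ∀ v ∈ (Finset.univ : Finset (Fin (n+1))),
        v ∉ insert i (T.children i) → B i v * f v * B j v = 0 := by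
      intro v _ hv
      simp only [Finset.mem_insert, not_or] at hv
      have h1 : ¬ (T.parent v = i ∧ v ≠ i) := fun h => hv.2 ((hmemc i v).mpr h)
      have h2 : ¬ i = v := fun h => hv.1 h.symm
      have : B i v = 0 := by simp [hB, h1, h2]
      rw [this, zero_mul, zero_mul]
    have hsplit : ∑ v, B i v * f v * B j v
        = B i i * f i * B j i + ∑ v ∈ T.children i, B i v * f v * B j v := by
      rw [← Finset.sum_subset (Finset.subset_univ (insert i (T.children i))) hzero,
        Finset.sum_insert hnotmem]
    have hBic : ∀ v ∈ T.children i, B i v * f v = -1 := by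
      intro v hv
      have hv' := (hmemc i v).mp hv
      have : B i v = -(f v)⁻¹ := by simp [hB, hv'.1, hv'.2]
      rw [this, neg_mul, inv_mul_cancel₀ (hf v)]
    rw [hsplit, hBdiag, one_mul]
    by_cases hij : i = j
    · subst hij
      -- diagonal entry
      have hAii : (T.adjMat ℚ) i i = 0 := by simp [ParentTree.adjMat]
      rw [Matrix.charmatrix_apply_eq, hAii, map_zero, map_sub, map_zero, sub_zero]
      have hterm : ∀ v ∈ T.children i, B i v * f v * B i v = (f v)⁻¹ := by
        intro v hv
        have hv' := (hmemc i v).mp hv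
        have hBiv : B i v = -(f v)⁻¹ := by simp [hB, hv'.1, hv'.2]
        rw [hBic v hv, hBiv]
        ring
      rw [Finset.sum_congr rfl hterm, hBdiag, mul_one]
      -- now `f i + ∑ v in children i, (f v)⁻¹ = φ X`
      have hcard := hanti i
      rcases Nat.eq_zero_or_pos (k - lvl i) with hμ | hμ
      · have hempty : T.children i = ∅ := by
          rw [← Finset.card_eq_zero, hcard, hμ]
        rw [hempty, Finset.sum_empty, add_zero, hff]
        simp only [hμ]
        rw [ha0, div_one]
        norm_num [haa, hermiteHe_one']
      · obtain ⟨t, ht⟩ : ∃ t, k - lvl i = t + 1 := ⟨k - lvl i - 1, by omega⟩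
        have hchildval : ∀ v ∈ T.children i, (f v)⁻¹ = a t / a (t + 1) := by
          intro v hv
          have hlv : lvl v = lvl i + 1 := hchild_lvl i v hv
          have h1 : k - lvl v = t := by omega
          have h2 : k - lvl v + 1 = t + 1 := by omega
          rw [hff]
          simp only [h1, h2]
          rw [inv_div]
        rw [Finset.sum_congr rfl hchildval, Finset.sum_const, hcard, ht, hff]
        simp only [ht, show t + 1 + 1 = t + 2 from rfl]
        rw [nsmul_eq_mul]
        push_cast
        have hr := hrec t
        rw [mul_div_assoc', ← add_div, hr, mul_div_assoc, div_self (ha (t+1)), mul_one]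
    · -- off-diagonal entry
      have hAij : Matrix.charmatrix (T.adjMat ℚ) i j = - Polynomial.C ((T.adjMat ℚ) i j) :=
        Matrix.charmatrix_apply_ne _ _ _ hij
      have hAdj : (T.adjMat ℚ) i j
          = if T.parent i = j ∨ T.parent j = i then 1 else 0 := by
        simp [ParentTree.adjMat, hij]
      have hCsum : ∀ v ∈ T.children i, B i v * f v * B j v = -(B j v) := by
        intro v hv
        rw [hBic v hv]; ring
      rw [Finset.sum_congr rfl hCsum, hAij, hAdj]
      have hpar_excl : ¬ (T.parent i = j ∧ T.parent j = i) := by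
        rintro ⟨h1, h2⟩
        have hi0 : i ≠ 0 := by
          rintro rfl
          rw [T.parent_zero] at h1
          exact hij h1
        have hj0 : j ≠ 0 := by
          rintro rfl
          rw [T.parent_zero] at h2
          exact hij h2.symm
        have := T.parent_lt i hi0
        have := T.parent_lt j hj0
        rw [h1] at *
        omega
      by_cases h1 : T.parent i = j
      · -- i is a child of j
        have hBji : B j i = -(f i)⁻¹ := by simp [hB, h1, hij]
        have h2 : T.parent j ≠ i := fun h => hpar_excl ⟨h1, h⟩
        have hBjv : ∀ v ∈ T.children i, B j v = 0 := by
          intro v hv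
          have hv' := (hmemc i v).mp hv
          have hvj : v ≠ j := by
            rintro rfl
            exact h2 hv'.1
          have hnv : ¬ (T.parent v = j ∧ v ≠ j) := by
            rintro ⟨hp, -⟩
            exact hij (hv'.1 ▸ hp : i = j)
          have hjv : ¬ j = v := fun h => hvj h.symm
          simp [hB, hnv, hjv]
        rw [Finset.sum_congr rfl (fun v hv => by rw [hBjv v hv, neg_zero]),
          Finset.sum_const_zero, add_zero, hBji]
        rw [mul_neg, mul_inv_cancel₀ (hf i)]
        simp [h1, map_one]
      · by_cases h2 : T.parent j = i
        · -- j is a child of i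
          have hBji : B j i = 0 := by
            have hji : ¬ j = i := fun h => hij h.symm
            simp [hB, h1, hji]
          have hjmem : j ∈ T.children i := (hmemc i j).mpr ⟨h2, fun h => hij h.symm⟩
          have hsum1 : ∑ v ∈ T.children i, -(B j v) = -1 := by
            rw [Finset.sum_eq_single_of_mem j hjmem]
            · rw [hBdiag]
            · intro v hv hvj
              have hv' := (hmemc i v).mp hv
              have hnv : ¬ (T.parent v = j ∧ v ≠ j) := by
                rintro ⟨hp, -⟩
                rw [hv'.1] at hp
                exact hij hp
              have hjv : ¬ j = v := fun h => hvj h.symm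
              have : B j v = 0 := by
                simp [hB, hnv, hjv]
              rw [this, neg_zero]
          rw [hsum1, hBji, mul_zero, zero_add]
          simp [h2, map_one, h1]
        · -- not adjacent
          have hBji : B j i = 0 := by
            have hji : ¬ j = i := fun h => hij h.symm
            simp [hB, h1, hji]
          have hsum0 : ∑ v ∈ T.children i, -(B j v) = 0 := by
            apply Finset.sum_eq_zero
            intro v hv
            have hv' := (hmemc i v).mp hv
            have hvj : v ≠ j := by
              rintro rfl
              exact h2 hv'.1
            have hnv : ¬ (T.parent v = j ∧ v ≠ j) := by
              rintro ⟨hp, -⟩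
              rw [hv'.1] at hp
              exact hij hp
            have hjv : ¬ j = v := fun h => hvj h.symm
            simp [hB, hnv, hjv]
          rw [hsum0, hBji, mul_zero, zero_add]
          simp [h1, h2]
  -- determinant computation
  have hchar : φ ((T.adjMat ℚ).charpoly) = ∏ v, f v := by
    have h1 : φ ((T.adjMat ℚ).charpoly) = ((Matrix.charmatrix (T.adjMat ℚ)).map φ).det := by
      unfold Matrix.charpoly
      exact RingHom.map_det φ _
    rw [h1, hmain, Matrix.det_mul, Matrix.det_mul, hdetB, Matrix.det_transpose, hdetB,
      Matrix.det_diagonal, one_mul, mul_one]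
  -- counting vertices per level
  set S : ℕ → Finset (Fin (n+1)) := fun j => Finset.univ.filter (fun v => lvl v = j) with hS
  have hS1 : S 1 = {0} := by
    ext v
    simp only [hS, Finset.mem_filter, Finset.mem_univ, true_and, Finset.mem_singleton]
    constructor
    · intro h
      by_contra hv
      have h1 := hlvl v hv
      have h2 := hlvl1 (T.parent v)
      omega
    · intro h; rw [h, hlvl0]
  have hSstep : ∀ j, 1 ≤ j → S (j+1) = (S j).biUnion T.children := by
    intro j hj
    ext v
    simp only [hS, Finset.mem_filter, Finset.mem_univ, true_and, Finset.mem_biUnion]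
    constructor
    · intro hv
      have hv0 : v ≠ 0 := by
        intro h; rw [h, hlvl0] at hv; omega
      refine ⟨T.parent v, ?_, (hmemc _ v).mpr ⟨rfl, (T.parent_lt v hv0).ne'⟩⟩
      have := hlvl v hv0; omega
    · rintro ⟨u, hu, hv⟩
      rw [hchild_lvl u v hv, hu]
  have hcardstep : ∀ j, 1 ≤ j → (S (j+1)).card = (k - j) * (S j).card := by
    intro j hj
    rw [hSstep j hj, Finset.card_biUnion]
    · have hterm : ∀ u ∈ S j, (T.children u).card = k - j := by
        intro u hu
        have hu2 : lvl u = j := by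
          simp only [hS, Finset.mem_filter, Finset.mem_univ, true_and] at hu
          exact hu
        rw [hanti u, hu2]
      rw [Finset.sum_congr rfl hterm, Finset.sum_const, smul_eq_mul, mul_comm]
    · intro u hu u2 hu2 hne
      rw [Function.onFun, Finset.disjoint_left]
      intro w hw hw2
      exact hne ((((hmemc u w).mp hw).1.symm).trans (((hmemc u2 w).mp hw2).1))
  have hNfact : ∀ j, 1 ≤ j → j ≤ k → (S j).card * (k - j).factorial = (k-1).factorial := by
    intro j hj
    induction j, hj using Nat.le_induction with
    | base =>
      intro _
      rw [hS1, Finset.card_singleton, one_mul]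
    | succ j hj ih =>
      intro hjk
      have h1 : (S (j+1)).card = (k - j) * (S j).card := hcardstep j hj
      have h2 : (k - j) = (k - (j+1)) + 1 := by omega
      calc (S (j+1)).card * (k - (j+1)).factorial
          = (S j).card * ((k - j) * (k - (j+1)).factorial) := by rw [h1]; ring
        _ = (S j).card * (k - j).factorial := by rw [h2, Nat.factorial_succ]
        _ = (k-1).factorial := ih (by omega)
  -- group the product by levels
  have hfib : ∏ v, f v
      = ∏ j ∈ Finset.Icc 1 k, (a (k-j+1) / a (k-j)) ^ (S j).card := by
    rw [← Finset.prod_fiberwise_of_maps_to (g := lvl) (t := Finset.Icc 1 k)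
      (fun v _ => Finset.mem_Icc.mpr ⟨hlvl1 v, hle v⟩) f]
    apply Finset.prod_congr rfl
    intro j hj
    have hcst : ∀ v ∈ Finset.univ.filter (fun v => lvl v = j),
        f v = a (k-j+1) / a (k-j) := by
      intro v hv
      have hv2 : lvl v = j := by
        simp only [Finset.mem_filter, Finset.mem_univ, true_and] at hv
        exact hv
      rw [hff]
      simp only
      rw [hv2]
    rw [Finset.prod_congr rfl hcst, Finset.prod_const]
  -- exponents
  have hexp : ∀ m ∈ Finset.Icc 2 (k-1),
      (m - 1) * Nat.factorial (k - 1) / Nat.factorial m = (m-1) * (S (k-m)).card := by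
    intro m hm
    simp only [Finset.mem_Icc] at hm
    have h := hNfact (k-m) (by omega) (by omega)
    have hkm : k - (k - m) = m := by omega
    rw [hkm] at h
    rw [← h, ← mul_assoc, Nat.mul_div_cancel _ (Nat.factorial_pos m)]
  -- the polynomial identity
  have hpolyid : ∏ j ∈ Finset.Icc 1 k, hermiteHe (k-j+1) ^ (S j).card
      = (hermiteHe k *
          ∏ j ∈ Finset.Icc 2 (k - 1),
            hermiteHe j ^ ((j - 1) * Nat.factorial (k - 1) / Nat.factorial j))
        * ∏ j ∈ Finset.Icc 1 k, hermiteHe (k-j) ^ (S j).card := by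
    have hL : ∏ j ∈ Finset.Icc 1 k, hermiteHe (k-j+1) ^ (S j).card
        = ∏ j ∈ Finset.Icc 1 k, hermiteHe j ^ (S (k+1-j)).card := by
      rw [prod_Icc_reflect k (fun j => hermiteHe (k-j+1) ^ (S j).card)]
      apply Finset.prod_congr rfl
      intro j hj
      simp only [Finset.mem_Icc] at hj
      congr 2
      omega
    have hQ : ∏ j ∈ Finset.Icc 1 k, hermiteHe (k-j) ^ (S j).card
        = ∏ j ∈ Finset.Icc 1 (k-1), hermiteHe j ^ (S (k-j)).card := by
      rw [prod_Icc_reflect k (fun j => hermiteHe (k-j) ^ (S j).card)]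
      have h1 : ∏ j ∈ Finset.Icc 1 k, hermiteHe (k-(k+1-j)) ^ (S (k+1-j)).card
          = ∏ j ∈ Finset.Icc 1 k, hermiteHe (j-1) ^ (S (k+1-j)).card := by
        apply Finset.prod_congr rfl
        intro j hj
        simp only [Finset.mem_Icc] at hj
        congr 2
        omega
      rw [h1]
      have h2 : ∏ j ∈ Finset.Icc 2 k, hermiteHe (j-1) ^ (S (k+1-j)).card
          = ∏ j ∈ Finset.Icc 1 k, hermiteHe (j-1) ^ (S (k+1-j)).card := by
        apply Finset.prod_subset (Finset.Icc_subset_Icc_left (by omega))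
        intro x hx hx2
        simp only [Finset.mem_Icc] at hx hx2
        have hx1 : x = 1 := by omega
        rw [hx1]
        simp [hermiteHe_zero']
      rw [← h2]
      refine Finset.prod_nbij' (fun j => j - 1) (fun i => i + 1) ?_ ?_ ?_ ?_ ?_
      · intro x hx; simp only [Finset.mem_Icc] at hx
        refine Finset.mem_Icc.mpr ?_
        show 1 ≤ x - 1 ∧ x - 1 ≤ k - 1; omega
      · intro x hx; simp only [Finset.mem_Icc] at hx
        refine Finset.mem_Icc.mpr ?_
        show 2 ≤ x + 1 ∧ x + 1 ≤ k; omega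
      · intro x hx; simp only [Finset.mem_Icc] at hx
        show x - 1 + 1 = x; omega
      · intro x hx; simp only [Finset.mem_Icc] at hx
        show x + 1 - 1 = x; omega
      · intro x hx
        simp only [Finset.mem_Icc] at hx
        show hermiteHe (x-1) ^ (S (k+1-x)).card = hermiteHe (x-1) ^ (S (k-(x-1))).card
        rw [show k + 1 - x = k - (x-1) from by omega]
    have hk1 : k - 1 + 1 = k := by omega
    have hsplit : ∏ j ∈ Finset.Icc 1 k, hermiteHe j ^ (S (k+1-j)).card
        = (∏ j ∈ Finset.Icc 1 (k-1), hermiteHe j ^ (S (k+1-j)).card) * hermiteHe k := by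
      rw [← hk1, Finset.prod_Icc_succ_top (by omega : 1 ≤ k - 1 + 1)]
      rw [hk1, show k + 1 - k = 1 from by omega, hS1, Finset.card_singleton, pow_one]
    have hmid : ∀ j ∈ Finset.Icc 1 (k-1),
        hermiteHe j ^ (S (k+1-j)).card
          = hermiteHe j ^ (S (k-j)).card * hermiteHe j ^ ((j-1) * (S (k-j)).card) := by
      intro j hj
      simp only [Finset.mem_Icc] at hj
      have h1 := hcardstep (k-j) (by omega)
      rw [show k - (k-j) = j from by omega] at h1
      rw [show k+1-j = k-j+1 from by omega, h1, ← pow_add]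
      congr 1
      obtain ⟨t, rfl⟩ : ∃ t, j = t + 1 := ⟨j - 1, by omega⟩
      simp only [Nat.add_sub_cancel]
      ring
    have hrestr : ∏ j ∈ Finset.Icc 1 (k-1), hermiteHe j ^ ((j-1) * (S (k-j)).card)
        = ∏ j ∈ Finset.Icc 2 (k-1), hermiteHe j ^ ((j-1) * (S (k-j)).card) := by
      symm
      apply Finset.prod_subset (Finset.Icc_subset_Icc_left (by omega))
      intro x hx hx2
      simp only [Finset.mem_Icc] at hx hx2
      have hx1 : x = 1 := by omega
      rw [hx1]
      norm_num
    have hfinalprod : ∏ j ∈ Finset.Icc 2 (k-1), hermiteHe j ^ ((j-1) * (S (k-j)).card)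
        = ∏ j ∈ Finset.Icc 2 (k-1),
            hermiteHe j ^ ((j - 1) * Nat.factorial (k - 1) / Nat.factorial j) :=
      Finset.prod_congr rfl (fun j hj => by rw [hexp j hj])
    rw [hL, hQ, hsplit, Finset.prod_congr rfl hmid, Finset.prod_mul_distrib, hrestr, hfinalprod]
    ring
  -- conclusion
  have hQne : (∏ j ∈ Finset.Icc 1 k, hermiteHe (k-j) ^ (S j).card) ≠ 0 :=
    Finset.prod_ne_zero_iff.mpr (fun j _ => pow_ne_zero _ (hermiteHe_ne_zero _))
  have hQ0 : φ (∏ j ∈ Finset.Icc 1 k, hermiteHe (k-j) ^ (S j).card) ≠ 0 := by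
    intro h
    exact hQne (hφinj (by rw [h, map_zero]))
  apply hφinj
  rw [hchar, hfib]
  have hdivs : ∏ j ∈ Finset.Icc 1 k, (a (k-j+1) / a (k-j)) ^ (S j).card
      = φ (∏ j ∈ Finset.Icc 1 k, hermiteHe (k-j+1) ^ (S j).card)
        / φ (∏ j ∈ Finset.Icc 1 k, hermiteHe (k-j) ^ (S j).card) := by
    rw [map_prod, map_prod, ← Finset.prod_div_distrib]
    apply Finset.prod_congr rfl
    intro j _
    rw [map_pow, map_pow, div_pow]
  rw [hdivs, hpolyid, map_mul, mul_div_assoc, div_self hQ0, mul_one]
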